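/- Let n ≥ 3 be odd. The map [p,q,r] ↦ [-2p,-2q,-2r] is a bijection from the set of small tours in ℤ/nℤ to the set of odd tours in ℤ/nℤ, with inverse [p,q,r] ↦ [mp,mq,mr] where m = (n-1)/2. -/

import Mathlib

/-- Cyclic rotation of an ordered triple. -/
def rotTriple {α : Type*} (t : α × α × α) : α × α × α := (t.2.1, t.2.2, t.1)

/-- Tours: length-3 necklaces (ordered triples up to cyclic rotation) of elements of `ℤ/nℤ`. -/
def Tour (n : ℕ) : Type :=
  Quot (fun a b : ZMod n × ZMod n × ZMod n => b = rotTriple a)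

/-- Componentwise multiplication by a constant. -/
def tripleMul (n : ℕ) (c : ZMod n) (t : ZMod n × ZMod n × ZMod n) :
    ZMod n × ZMod n × ZMod n :=
  (c * t.1, c * t.2.1, c * t.2.2)

/-- Componentwise multiplication descends to tours. -/
def tourMul (n : ℕ) (c : ZMod n) : Tour n → Tour n :=
  Quot.map (tripleMul n c) (by rintro a b rfl; rfl)

/-- A triple is a small tour representative: its entries are distinct and its three
steps have representatives in `{1,...,(n-1)/2}`. -/
def isSmallTriple (n : ℕ) (t : ZMod n × ZMod n × ZMod n) : Prop :=
  t.1 ≠ t.2.1 ∧ t.2.1 ≠ t.2.2 ∧ t.2.2 ≠ t.1 ∧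
  (t.2.1 - t.1).val ≤ (n - 1) / 2 ∧ (t.2.2 - t.2.1).val ≤ (n - 1) / 2 ∧
  (t.1 - t.2.2).val ≤ (n - 1) / 2

/-- A triple is an odd tour representative: its entries are distinct and its three
steps have odd representatives in `[1..n-1]`. -/
def isOddTriple (n : ℕ) (t : ZMod n × ZMod n × ZMod n) : Prop :=
  t.1 ≠ t.2.1 ∧ t.2.1 ≠ t.2.2 ∧ t.2.2 ≠ t.1 ∧
  Odd (t.2.1 - t.1).val ∧ Odd (t.2.2 - t.2.1).val ∧ Odd (t.1 - t.2.2).val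

/-- The set of small tours. -/
def SmallTours (n : ℕ) : Set (Tour n) :=
  {T | ∃ a, isSmallTriple n a ∧ Quot.mk _ a = T}

/-- The set of odd tours. -/
def OddTours (n : ℕ) : Set (Tour n) :=
  {T | ∃ a, isOddTriple n a ∧ Quot.mk _ a = T}


private lemma tourMul_mk {n : ℕ} (c : ZMod n) (t : ZMod n × ZMod n × ZMod n) :
    tourMul n c (Quot.mk _ t) = Quot.mk _ (tripleMul n c t) := rfl

private lemma tourMul_mul {n : ℕ} (a b : ZMod n) (T : Tour n) :
    tourMul n a (tourMul n b T) = tourMul n (a * b) T := by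
  induction T using Quot.ind with
  | _ t =>
    rw [tourMul_mk, tourMul_mk, tourMul_mk]
    simp [tripleMul, mul_assoc]
    rfl

private lemma tourMul_one {n : ℕ} (T : Tour n) : tourMul n 1 T = T := by
  induction T using Quot.ind with
  | _ t =>
    rw [tourMul_mk]
    simp [tripleMul]
    rfl

private lemma half_mul_neg_two {n : ℕ} (hn : 3 ≤ n) (hodd : Odd n) :
    (((n - 1) / 2 : ℕ) : ZMod n) * (-2) = 1 := by
  obtain ⟨j, hj⟩ := hodd
  have h2 : 2 * ((n - 1) / 2) = n - 1 := by omega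
  have hh : ((2 * ((n - 1) / 2) : ℕ) : ZMod n) = ((n - 1 : ℕ) : ZMod n) := by rw [h2]
  have hcast : ((n - 1 : ℕ) : ZMod n) = -1 := by
    rw [Nat.cast_sub (by omega : 1 ≤ n)]
    simp
  push_cast at hh
  linear_combination -hh - hcast

private lemma small_step_odd {n : ℕ} (hn : 3 ≤ n) (hodd : Odd n) (s : ZMod n)
    (hs : s ≠ 0) (hle : s.val ≤ (n - 1) / 2) : Odd ((-2 * s : ZMod n)).val := by
  haveI : NeZero n := ⟨by omega⟩
  obtain ⟨j, hj⟩ := hodd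
  have hv0 : s.val ≠ 0 := fun h => hs ((ZMod.val_eq_zero s).mp h)
  have hvlt : 2 * s.val < n := by omega
  have h2s : ((2 * s.val : ℕ) : ZMod n) = 2 * s := by
    push_cast [ZMod.natCast_val, ZMod.cast_id]; ring
  have hval2s : (2 * s : ZMod n).val = 2 * s.val := by
    rw [← h2s, ZMod.val_cast_of_lt hvlt]
  have h2sne : (2 * s : ZMod n) ≠ 0 := by
    intro h
    rw [h, ZMod.val_zero] at hval2s
    omega
  have heq : (-2 * s : ZMod n) = -(2 * s) := by ring
  rw [heq, ZMod.neg_val, if_neg h2sne, hval2s]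
  exact ⟨j - s.val, by omega⟩

private lemma odd_step_small {n : ℕ} (hn : 3 ≤ n) (hodd : Odd n) (s : ZMod n)
    (ho : Odd s.val) : ((((n - 1) / 2 : ℕ) : ZMod n) * s).val ≤ (n - 1) / 2 := by
  haveI : NeZero n := ⟨by omega⟩
  obtain ⟨j, hj⟩ := hodd
  obtain ⟨k, hk⟩ := ho
  have hvlt : s.val < n := ZMod.val_lt s
  have hunit : IsUnit (2 : ZMod n) := by
    have h := half_mul_neg_two hn ⟨j, hj⟩
    refine IsUnit.of_mul_eq_one (-(((n - 1) / 2 : ℕ) : ZMod n)) ?_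
    linear_combination h
  have key : (2 : ZMod n) * ((((n - 1) / 2 : ℕ) : ZMod n) * s)
      = 2 * (((n - s.val) / 2 : ℕ) : ZMod n) := by
    have h1 : (2 : ZMod n) * (((n - 1) / 2 : ℕ) : ZMod n) = ((n - 1 : ℕ) : ZMod n) := by
      have h2 : 2 * ((n - 1) / 2) = n - 1 := by omega
      rw [← Nat.cast_ofNat, ← Nat.cast_mul, h2]
    have h3 : ((n - 1 : ℕ) : ZMod n) = -1 := by
      rw [Nat.cast_sub (by omega : 1 ≤ n)]; simp
    have h4 : (2 : ZMod n) * (((n - s.val) / 2 : ℕ) : ZMod n)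
        = ((n - s.val : ℕ) : ZMod n) := by
      have h5 : 2 * ((n - s.val) / 2) = n - s.val := by omega
      rw [← Nat.cast_ofNat, ← Nat.cast_mul, h5]
    have h5 : ((n - s.val : ℕ) : ZMod n) = -s := by
      rw [Nat.cast_sub (le_of_lt hvlt)]
      simp [ZMod.natCast_val, ZMod.cast_id]
    rw [h4, h5, ← mul_assoc, h1, h3]; ring
  have hcs : (((n - 1) / 2 : ℕ) : ZMod n) * s = (((n - s.val) / 2 : ℕ) : ZMod n) :=
    hunit.mul_right_injective key
  rw [hcs, ZMod.val_cast_of_lt (by omega : (n - s.val) / 2 < n)]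
  omega

private lemma neg_two_unit {n : ℕ} (hn : 3 ≤ n) (hodd : Odd n) : IsUnit (-2 : ZMod n) :=
  IsUnit.of_mul_eq_one _ (by rw [mul_comm]; exact half_mul_neg_two hn hodd)

private lemma half_unit {n : ℕ} (hn : 3 ≤ n) (hodd : Odd n) :
    IsUnit (((n - 1) / 2 : ℕ) : ZMod n) :=
  IsUnit.of_mul_eq_one _ (half_mul_neg_two hn hodd)

private lemma small_to_odd {n : ℕ} (hn : 3 ≤ n) (hodd : Odd n)
    {t : ZMod n × ZMod n × ZMod n} (ht : isSmallTriple n t) :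
    isOddTriple n (tripleMul n (-2) t) := by
  obtain ⟨h1, h2, h3, h4, h5, h6⟩ := ht
  have hu := (neg_two_unit hn hodd).mul_right_injective
  have step : ∀ a b : ZMod n, a ≠ b → (b - a).val ≤ (n - 1) / 2 →
      Odd ((-2 : ZMod n) * b - (-2) * a).val := by
    intro a b hab hle
    have heq : (-2 : ZMod n) * b - (-2) * a = -2 * (b - a) := by ring
    rw [heq]
    exact small_step_odd hn hodd _ (sub_ne_zero.mpr (Ne.symm hab)) hle
  exact ⟨fun h => h1 (hu h), fun h => h2 (hu h), fun h => h3 (hu h),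
    step _ _ h1 h4, step _ _ h2 h5, step _ _ h3 h6⟩

private lemma odd_to_small {n : ℕ} (hn : 3 ≤ n) (hodd : Odd n)
    {t : ZMod n × ZMod n × ZMod n} (ht : isOddTriple n t) :
    isSmallTriple n (tripleMul n (((n - 1) / 2 : ℕ) : ZMod n) t) := by
  obtain ⟨h1, h2, h3, h4, h5, h6⟩ := ht
  have hu := (half_unit hn hodd).mul_right_injective
  have step : ∀ a b : ZMod n, Odd (b - a).val →
      ((((n - 1) / 2 : ℕ) : ZMod n) * b - (((n - 1) / 2 : ℕ) : ZMod n) * a).val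
        ≤ (n - 1) / 2 := by
    intro a b ho
    have heq : (((n - 1) / 2 : ℕ) : ZMod n) * b - (((n - 1) / 2 : ℕ) : ZMod n) * a
        = (((n - 1) / 2 : ℕ) : ZMod n) * (b - a) := by ring
    rw [heq]
    exact odd_step_small hn hodd _ ho
  exact ⟨fun h => h1 (hu h), fun h => h2 (hu h), fun h => h3 (hu h),
    step _ _ h4, step _ _ h5, step _ _ h6⟩

/-- For odd `n ≥ 3`, the map `[p,q,r] ↦ [-2p,-2q,-2r]` is a bijection from small
tours to odd tours, with inverse `[p,q,r] ↦ [mp,mq,mr]` where `m = (n-1)/2`. -/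
theorem stmt_4 (n : ℕ) (hn : 3 ≤ n) (hodd : Odd n) :
    Set.BijOn (tourMul n (-2)) (SmallTours n) (OddTours n) ∧
    Set.InvOn (tourMul n (((n - 1) / 2 : ℕ) : ZMod n)) (tourMul n (-2))
      (SmallTours n) (OddTours n) := by
  have hc2 : (((n - 1) / 2 : ℕ) : ZMod n) * (-2) = 1 := half_mul_neg_two hn hodd
  have h2c : (-2 : ZMod n) * (((n - 1) / 2 : ℕ) : ZMod n) = 1 := by
    rw [mul_comm]; exact hc2
  have linv : ∀ T, tourMul n (((n - 1) / 2 : ℕ) : ZMod n) (tourMul n (-2) T) = T := by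
    intro T; rw [tourMul_mul, hc2, tourMul_one]
  have rinv : ∀ T, tourMul n (-2) (tourMul n (((n - 1) / 2 : ℕ) : ZMod n) T) = T := by
    intro T; rw [tourMul_mul, h2c, tourMul_one]
  have maps : Set.MapsTo (tourMul n (-2)) (SmallTours n) (OddTours n) := by
    rintro T ⟨a, ha, rfl⟩
    exact ⟨tripleMul n (-2) a, small_to_odd hn hodd ha, rfl⟩
  have maps' : Set.MapsTo (tourMul n (((n - 1) / 2 : ℕ) : ZMod n)) (OddTours n) (SmallTours n) := by
    rintro T ⟨a, ha, rfl⟩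
    exact ⟨tripleMul n (((n - 1) / 2 : ℕ) : ZMod n) a, odd_to_small hn hodd ha, rfl⟩
  have surj : Set.SurjOn (tourMul n (-2)) (SmallTours n) (OddTours n) := by
    intro T hT
    exact ⟨tourMul n (((n - 1) / 2 : ℕ) : ZMod n) T, maps' hT, rinv T⟩
  refine ⟨⟨maps, fun x _ y _ h => ?_, surj⟩, fun T _ => linv T, fun T _ => rinv T⟩
  rw [← linv x, h, linv y]
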